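/- Let G be a finite simple graph and ℓ ≥ 1 an integer. If G is ℓ-tangle-free, then for all vertices i, j one has D^(ℓ)_{ij} ≤ B^(ℓ)_{ij} ≤ D^(ℓ)_{ij} + 1; in other words, every entry of the matrix Δ^(ℓ) = B^(ℓ) − D^(ℓ) lies in {0, 1}. -/

import Mathlib

/-- The `(i,j)` entry of the path expansion matrix `B^(ℓ)`: the number of self-avoiding
paths of length `ℓ` from `i` to `j`. -/
noncomputable def pathCount {V : Type*} (G : SimpleGraph V) (ℓ : ℕ) (i j : V) : ℕ :=
  Set.ncard {p : G.Walk i j | p.IsPath ∧ p.length = ℓ}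

/-- The `(i,j)` entry of the distance matrix `D^(ℓ)`: `1` if the graph distance between
`i` and `j` equals `ℓ`, and `0` otherwise. -/
noncomputable def distEntry {V : Type*} (G : SimpleGraph V) (ℓ : ℕ) (i j : V) : ℕ :=
  if G.edist i j = (ℓ : ℕ∞) then 1 else 0

/-- A graph is `ℓ`-tangle-free if, for every vertex `v`, any two cycles all of whose
vertices lie at graph distance at most `ℓ` from `v` have the same edge set. -/
def TangleFree {V : Type*} [DecidableEq V] (G : SimpleGraph V) (ℓ : ℕ) : Prop :=
  ∀ (v a b : V) (c₁ : G.Walk a a) (c₂ : G.Walk b b),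
    c₁.IsCycle → c₂.IsCycle →
    (∀ w ∈ c₁.support, G.edist v w ≤ (ℓ : ℕ∞)) →
    (∀ w ∈ c₂.support, G.edist v w ≤ (ℓ : ℕ∞)) →
    c₁.edges.toFinset = c₂.edges.toFinset

section Aux

open SimpleGraph Walk

variable {V : Type*}


lemma walk_eq_of_support_eq {G : SimpleGraph V} {u v : V} (p : G.Walk u v) :
    ∀ q : G.Walk u v, p.support = q.support → p = q := by
  induction p with
  | nil =>
    intro q h
    cases q with
    | nil => rfl
    | cons h' q' =>
      rw [Walk.support_nil, Walk.support_cons] at h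
      have := congrArg List.length h
      simp at this
  | cons h p ih =>
    intro q hq
    cases q with
    | nil =>
      rw [Walk.support_cons, Walk.support_nil] at hq
      have := congrArg List.length hq
      simp at this
    | cons h' q' =>
      rw [Walk.support_cons, Walk.support_cons] at hq
      have htail : p.support = q'.support := by injection hq
      have hh := htail
      rw [p.support_eq_cons, q'.support_eq_cons] at hh
      injection hh with h1 _
      subst h1
      rw [ih q' htail]

lemma exists_cons_of_mem_edges_start {G : SimpleGraph V} {u v w : V} (p : G.Walk u v)
    (hp : p.IsPath) (he : s(u, w) ∈ p.edges) :
    ∃ (h : G.Adj u w) (p' : G.Walk w v), p = Walk.cons h p' := by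
  cases p with
  | nil => simp at he
  | cons h' p' =>
    rw [Walk.edges_cons, List.mem_cons] at he
    rcases he with he | he
    · rw [Sym2.eq_iff] at he
      rcases he with ⟨-, rfl⟩ | ⟨h1, -⟩
      · exact ⟨h', p', rfl⟩
      · exact absurd (h1 ▸ h') G.irrefl
    · exfalso
      have hu := p'.fst_mem_support_of_mem_edges he
      rw [Walk.cons_isPath_iff] at hp
      exact hp.2 hu

lemma exists_decomp_of_dart_mem {G : SimpleGraph V} {u v : V} (p : G.Walk u v) {d : G.Dart}
    (hd : d ∈ p.darts) :
    ∃ (A : G.Walk u d.fst) (B : G.Walk d.snd v), p = A.append (Walk.cons d.adj B) := by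
  induction p with
  | nil => simp at hd
  | cons h q ih =>
    rw [Walk.darts_cons, List.mem_cons] at hd
    rcases hd with rfl | hd
    · exact ⟨Walk.nil, q, rfl⟩
    · obtain ⟨A, B, rfl⟩ := ih hd
      exact ⟨Walk.cons h A, B, by rw [Walk.cons_append]⟩

lemma mem_edge_of_mem_support {G : SimpleGraph V} {x y : V} (q : G.Walk x y) :
    ∀ w ∈ q.support, w = y ∨ ∃ e ∈ q.edges, w ∈ e := by
  induction q with
  | nil => intro w hw; left; simpa using hw
  | @cons a b c h r ih =>
    intro w hw
    rw [Walk.support_cons, List.mem_cons] at hw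
    rcases hw with rfl | hw
    · right; exact ⟨s(w, b), by simp, Sym2.mem_mk_left _ _⟩
    · rcases ih w hw with h' | ⟨e, he, hwe⟩
      · left; exact h'
      · right; exact ⟨e, by simp [he], hwe⟩

lemma mem_edge_of_mem_support_closed {G : SimpleGraph V} {a : V} (c : G.Walk a a)
    (hc : ¬ c.Nil) : ∀ w ∈ c.support, ∃ e ∈ c.edges, w ∈ e := by
  cases c with
  | nil => simp at hc
  | @cons _ b _ h r =>
    intro w hw
    rw [Walk.support_cons, List.mem_cons] at hw
    rcases hw with rfl | hw
    · exact ⟨s(w, b), by simp, Sym2.mem_mk_left _ _⟩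
    · rcases mem_edge_of_mem_support r w hw with rfl | ⟨e, he, hwe⟩
      · exact ⟨s(w, b), by simp, Sym2.mem_mk_left _ _⟩
      · exact ⟨e, by simp [he], hwe⟩

lemma mem_support_of_mem_edges' {G : SimpleGraph V} {u v w : V} (t : G.Walk u v) {e : Sym2 V}
    (he : e ∈ t.edges) (hw : w ∈ e) : w ∈ t.support := by
  induction e with
  | _ x y =>
    rw [Sym2.mem_iff] at hw
    rcases hw with rfl | rfl
    · exact t.fst_mem_support_of_mem_edges he
    · exact t.snd_mem_support_of_mem_edges he

lemma coe_mapSpanningSubgraphs_eq_id {G H : SimpleGraph V} (hle : G ≤ H) :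
    ⇑(SimpleGraph.Hom.ofLE hle) = id := rfl

lemma support_mapLe {G H : SimpleGraph V} (hle : G ≤ H) {u v : V} (w : G.Walk u v) :
    (w.mapLe hle).support = w.support := by
  simp [Walk.mapLe, Walk.support_map, coe_mapSpanningSubgraphs_eq_id]

lemma edges_mapLe {G H : SimpleGraph V} (hle : G ≤ H) {u v : V} (w : G.Walk u v) :
    (w.mapLe hle).edges = w.edges := by
  simp [Walk.mapLe, Walk.edges_map, coe_mapSpanningSubgraphs_eq_id]

lemma treeAux [DecidableEq V] {G : SimpleGraph V} (hac : G.IsAcyclic) {x y j : V}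
    (B : G.Walk y j) (D : G.Walk x j) :
    ∀ (n : ℕ) (i₀ : V) (A : G.Walk i₀ x) (C : G.Walk i₀ y),
      A.length ≤ n → A.IsPath → C.IsPath →
      (∀ w ∈ A.support, w ∉ B.support) →
      (∀ w ∈ C.support, w ∉ D.support) →
      x ∉ C.support → y ∉ A.support → False := by
  intro n
  induction n with
  | zero =>
    intro i₀ A C hlen hA hC hAB hCD hxC hyA
    have h0 : A.length = 0 := Nat.le_zero.mp hlen
    have : i₀ = x := Walk.eq_of_length_eq_zero h0
    exact hxC (this ▸ C.start_mem_support)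
  | succ n ih =>
    intro i₀ A C hlen hA hC hAB hCD hxC hyA
    have hi₀B : i₀ ∉ B.support := hAB i₀ A.start_mem_support
    have hij : i₀ ≠ j := fun h => hi₀B (h ▸ B.end_mem_support)
    have hReq : (A.append D).bypass = (C.append B).bypass := by
      have := hac.path_unique ⟨(A.append D).bypass, (A.append D).bypass_isPath⟩
        ⟨(C.append B).bypass, (C.append B).bypass_isPath⟩
      exact Subtype.ext_iff.mp this
    have hnn : ¬ (A.append D).bypass.Nil := Walk.not_nil_of_ne hij
    rw [Walk.not_nil_iff] at hnn
    obtain ⟨w₁, hadj, W, hW⟩ := hnn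
    have hr₁ : s(i₀, w₁) ∈ (A.append D).bypass.edges := by rw [hW]; simp
    have hrA : s(i₀, w₁) ∈ A.edges := by
      have h' := (A.append D).edges_bypass_subset hr₁
      rw [Walk.edges_append, List.mem_append] at h'
      rcases h' with h' | h'
      · exact h'
      · exact absurd (D.fst_mem_support_of_mem_edges h') (hCD i₀ C.start_mem_support)
    have hrC : s(i₀, w₁) ∈ C.edges := by
      have hr₂ : s(i₀, w₁) ∈ (C.append B).bypass.edges := by rw [← hReq]; exact hr₁
      have h' := (C.append B).edges_bypass_subset hr₂
      rw [Walk.edges_append, List.mem_append] at h'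
      rcases h' with h' | h'
      · exact h'
      · exact absurd (B.fst_mem_support_of_mem_edges h') hi₀B
    obtain ⟨hA1, A₁, rfl⟩ := exists_cons_of_mem_edges_start A hA hrA
    obtain ⟨hC1, C₁, rfl⟩ := exists_cons_of_mem_edges_start C hC hrC
    exact ih w₁ A₁ C₁ (by simpa using hlen) hA.of_cons hC.of_cons
      (fun w hw => hAB w (by simp [hw]))
      (fun w hw => hCD w (by simp [hw]))
      (fun hx => hxC (by simp [hx]))
      (fun hy => hyA (by simp [hy]))


lemma core_no_three [DecidableEq V] {G : SimpleGraph V} {ℓ : ℕ}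
    (htf : TangleFree G ℓ) {i j : V} (p q r : G.Walk i j)
    (hpP : p.IsPath) (hqP : q.IsPath) (hrP : r.IsPath)
    (hpl : p.length ≤ ℓ) (hql : q.length ≤ ℓ) (hrl : r.length ≤ ℓ)
    (hpq : p ≠ q) (hpr : p ≠ r) (hqr : q ≠ r) : False := by
  classical
  set S : Set (Sym2 V) := {e | e ∈ p.edges ∨ e ∈ q.edges ∨ e ∈ r.edges} with hS
  have hSsub : S ⊆ G.edgeSet := by
    rintro e (he | he | he) <;> exact Walk.edges_subset_edgeSet _ he
  set H : SimpleGraph V := SimpleGraph.fromEdgeSet S with hH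
  have hle : H ≤ G := by
    rw [hH, ← SimpleGraph.fromEdgeSet_edgeSet G]
    exact SimpleGraph.fromEdgeSet_mono hSsub
  have hmem : ∀ (t : G.Walk i j), (∀ e ∈ t.edges, e ∈ S) → ∀ e ∈ t.edges, e ∈ H.edgeSet := by
    intro t ht e he
    rw [hH, SimpleGraph.edgeSet_fromEdgeSet]
    exact ⟨ht e he, G.not_isDiag_of_mem_edgeSet (Walk.edges_subset_edgeSet t he)⟩
  have hpe : ∀ e ∈ p.edges, e ∈ H.edgeSet := hmem p (fun e he => Or.inl he)
  have hqe : ∀ e ∈ q.edges, e ∈ H.edgeSet := hmem q (fun e he => Or.inr (Or.inl he))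
  have hre : ∀ e ∈ r.edges, e ∈ H.edgeSet := hmem r (fun e he => Or.inr (Or.inr he))
  set pH := p.transfer H hpe with hpH
  set qH := q.transfer H hqe with hqH
  set rH := r.transfer H hre with hrH
  -- ball bound
  have hball : ∀ w : V, w ∈ p.support ∨ w ∈ q.support ∨ w ∈ r.support →
      G.edist i w ≤ (ℓ : ℕ∞) := by
    have key : ∀ (t : G.Walk i j), t.length ≤ ℓ → ∀ w ∈ t.support, G.edist i w ≤ (ℓ : ℕ∞) := by
      intro t htl w hw
      calc G.edist i w ≤ ((t.takeUntil w hw).length : ℕ∞) := SimpleGraph.edist_le _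
        _ ≤ (ℓ : ℕ∞) := Nat.cast_le.mpr ((t.length_takeUntil_le hw).trans htl)
    rintro w (hw | hw | hw)
    · exact key p hpl w hw
    · exact key q hql w hw
    · exact key r hrl w hw
  -- distinctness in H
  have htransfer_ne : ∀ (s t : G.Walk i j) (hs ht), s ≠ t →
      s.transfer H hs ≠ t.transfer H ht := by
    intro s t hs ht hst hEq
    exact hst (walk_eq_of_support_eq s t (by
      rw [← Walk.support_transfer s hs, hEq, Walk.support_transfer]))
  -- every cycle of H lies in the ball
  have hcycball : ∀ (a : V) (c : H.Walk a a), c.IsCycle →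
      ∀ w ∈ (c.mapLe hle).support, G.edist i w ≤ (ℓ : ℕ∞) := by
    intro a c hc w hw
    rw [support_mapLe] at hw
    have hnn : ¬ c.Nil := by
      have h3 := hc.three_le_length
      rw [Walk.nil_iff_length_eq]
      omega
    obtain ⟨e, he, hwe⟩ := mem_edge_of_mem_support_closed c hnn w hw
    have heS : e ∈ S := by
      have h1 := Walk.edges_subset_edgeSet c he
      rw [hH, SimpleGraph.edgeSet_fromEdgeSet] at h1
      exact h1.1
    apply hball
    rcases heS with h1 | h1 | h1
    · exact Or.inl (mem_support_of_mem_edges' p h1 hwe)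
    · exact Or.inr (Or.inl (mem_support_of_mem_edges' q h1 hwe))
    · exact Or.inr (Or.inr (mem_support_of_mem_edges' r h1 hwe))
  -- all cycles of H have the same edge finset
  have hsame : ∀ (a b : V) (c₁ : H.Walk a a) (c₂ : H.Walk b b), c₁.IsCycle → c₂.IsCycle →
      c₁.edges.toFinset = c₂.edges.toFinset := by
    intro a b c₁ c₂ h₁ h₂
    have := htf i a b (c₁.mapLe hle) (c₂.mapLe hle) (h₁.mapLe hle) (h₂.mapLe hle)
      (hcycball a c₁ h₁) (hcycball b c₂ h₂)
    rwa [edges_mapLe, edges_mapLe] at this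
  -- H is not acyclic
  have hpHqH : pH ≠ qH := htransfer_ne p q hpe hqe hpq
  have hpHrH : pH ≠ rH := htransfer_ne p r hpe hre hpr
  have hqHrH : qH ≠ rH := htransfer_ne q r hqe hre hqr
  have hnotacyc : ¬ H.IsAcyclic := by
    intro hacH
    exact hpHqH (Subtype.ext_iff.mp
      (hacH.path_unique ⟨pH, hpP.transfer hpe⟩ ⟨qH, hqP.transfer hqe⟩))
  rw [SimpleGraph.IsAcyclic] at hnotacyc
  push_neg at hnotacyc
  obtain ⟨a, c, hc⟩ := hnotacyc
  have hcne : c.edges ≠ [] := by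
    intro h0
    have h3 := hc.three_le_length
    have h4 : c.edges.length = c.length := Walk.length_edges c
    rw [h0] at h4
    simp at h4
    omega
  obtain ⟨e, he⟩ := List.exists_mem_of_ne_nil c.edges hcne
  set H' := H.deleteEdges {e} with hH'
  have hle' : H' ≤ H := SimpleGraph.deleteEdges_le _
  have hH'acyc : H'.IsAcyclic := by
    intro b c' hc'
    have hcc := hsame b a (c'.mapLe hle') c (hc'.mapLe hle') hc
    have heN : e ∉ (c'.mapLe hle').edges := by
      rw [edges_mapLe]
      intro hmemE
      have h1 := Walk.edges_subset_edgeSet c' hmemE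
      rw [hH', SimpleGraph.edgeSet_deleteEdges] at h1
      exact h1.2 rfl
    rw [Finset.ext_iff] at hcc
    exact heN (List.mem_toFinset.mp ((hcc e).mpr (List.mem_toFinset.mpr he)))
  -- paths avoiding e are unique
  have hH'edge : ∀ {u v : V} (t : H.Walk u v), e ∉ t.edges → ∀ f ∈ t.edges, f ∈ H'.edgeSet := by
    intro u v t het f hf
    rw [hH', SimpleGraph.edgeSet_deleteEdges]
    exact ⟨Walk.edges_subset_edgeSet t hf, fun hfe => het (Set.mem_singleton_iff.mp hfe ▸ hf)⟩
  have havoid : ∀ (P Q : H.Walk i j), P.IsPath → Q.IsPath → e ∉ P.edges → e ∉ Q.edges →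
      P = Q := by
    intro P Q hP hQ heP heQ
    have h1 := hH'acyc.path_unique
      ⟨P.transfer H' (hH'edge P heP), hP.transfer _⟩
      ⟨Q.transfer H' (hH'edge Q heQ), hQ.transfer _⟩
    have h2 : P.transfer H' (hH'edge P heP) = Q.transfer H' (hH'edge Q heQ) :=
      Subtype.ext_iff.mp h1
    apply walk_eq_of_support_eq
    rw [← Walk.support_transfer P (hH'edge P heP), h2, Walk.support_transfer]
  -- decomposition at e
  have hdecomp : ∀ (P : H.Walk i j), P.IsPath → e ∈ P.edges →
      ∃ (x y : V) (hxy : H.Adj x y) (A : H.Walk i x) (B : H.Walk y j),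
        e = s(x, y) ∧ P = A.append (Walk.cons hxy B) ∧ A.IsPath ∧ B.IsPath ∧
        (∀ w ∈ A.support, w ∉ B.support) ∧ e ∉ A.edges ∧ e ∉ B.edges := by
    intro P hP heP
    rw [Walk.edges, List.mem_map] at heP
    obtain ⟨d, hd, hde⟩ := heP
    obtain ⟨A, B, hPeq⟩ := exists_decomp_of_dart_mem P hd
    have hde' : e = s(d.fst, d.snd) := hde.symm
    have hsup : P.support = A.support ++ B.support := by
      rw [hPeq, Walk.support_append, Walk.support_cons]
      simp
    have hnodup := hP
    rw [Walk.isPath_def, hsup, List.nodup_append] at hnodup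
    obtain ⟨hA, hB, hABdisj⟩ := hnodup
    refine ⟨d.fst, d.snd, d.adj, A, B, hde', hPeq, Walk.isPath_def _ |>.mpr hA,
      Walk.isPath_def _ |>.mpr hB, fun w hw hwB => hABdisj w hw w hwB rfl, ?_, ?_⟩
    · intro heA
      rw [hde'] at heA
      exact hABdisj _ (A.snd_mem_support_of_mem_edges heA) _ B.start_mem_support rfl
    · intro heB
      rw [hde'] at heB
      exact hABdisj _ A.end_mem_support _ (B.fst_mem_support_of_mem_edges heB) rfl
  -- two of the three paths contain e
  obtain ⟨P, Q, hP, hQ, hPQ, heP, heQ⟩ :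
      ∃ P Q : H.Walk i j, P.IsPath ∧ Q.IsPath ∧ P ≠ Q ∧ e ∈ P.edges ∧ e ∈ Q.edges := by
    have hpHP : pH.IsPath := hpP.transfer hpe
    have hqHP : qH.IsPath := hqP.transfer hqe
    have hrHP : rH.IsPath := hrP.transfer hre
    by_cases h1 : e ∈ pH.edges <;> by_cases h2 : e ∈ qH.edges <;> by_cases h3 : e ∈ rH.edges
    · exact ⟨pH, qH, hpHP, hqHP, hpHqH, h1, h2⟩
    · exact ⟨pH, qH, hpHP, hqHP, hpHqH, h1, h2⟩
    · exact ⟨pH, rH, hpHP, hrHP, hpHrH, h1, h3⟩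
    · exact absurd (havoid qH rH hqHP hrHP h2 h3) hqHrH
    · exact ⟨qH, rH, hqHP, hrHP, hqHrH, h2, h3⟩
    · exact absurd (havoid pH rH hpHP hrHP h1 h3) hpHrH
    · exact absurd (havoid pH qH hpHP hqHP h1 h2) hpHqH
    · exact absurd (havoid pH qH hpHP hqHP h1 h2) hpHqH
  obtain ⟨x, y, hxy, AP, BP, hePxy, hPeq, hAPp, hBPp, hPdisj, heAP, heBP⟩ := hdecomp P hP heP
  obtain ⟨x', y', hxy', AQ, BQ, heQxy, hQeq, hAQp, hBQp, hQdisj, heAQ, heBQ⟩ := hdecomp Q hQ heQ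
  have horient : (x' = x ∧ y' = y) ∨ (x' = y ∧ y' = x) := by
    have hss : s(x', y') = s(x, y) := heQxy.symm.trans hePxy
    rw [Sym2.eq_iff] at hss
    tauto
  rcases horient with ⟨rfl, rfl⟩ | ⟨rfl, rfl⟩
  · -- same orientation: P = Q, contradiction
    apply hPQ
    have hAeq : AP = AQ := by
      have h1 := hH'acyc.path_unique
        ⟨AP.transfer H' (hH'edge AP heAP), hAPp.transfer _⟩
        ⟨AQ.transfer H' (hH'edge AQ heAQ), hAQp.transfer _⟩
      have h2 : AP.transfer H' (hH'edge AP heAP) = AQ.transfer H' (hH'edge AQ heAQ) :=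
        Subtype.ext_iff.mp h1
      apply walk_eq_of_support_eq
      rw [← Walk.support_transfer AP (hH'edge AP heAP), h2, Walk.support_transfer]
    have hBeq : BP = BQ := by
      have h1 := hH'acyc.path_unique
        ⟨BP.transfer H' (hH'edge BP heBP), hBPp.transfer _⟩
        ⟨BQ.transfer H' (hH'edge BQ heBQ), hBQp.transfer _⟩
      have h2 : BP.transfer H' (hH'edge BP heBP) = BQ.transfer H' (hH'edge BQ heBQ) :=
        Subtype.ext_iff.mp h1
      apply walk_eq_of_support_eq
      rw [← Walk.support_transfer BP (hH'edge BP heBP), h2, Walk.support_transfer]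
    rw [hPeq, hQeq, hAeq, hBeq]
  · -- opposite orientation: apply treeAux
    exact treeAux hH'acyc (BP.transfer H' (hH'edge BP heBP)) (BQ.transfer H' (hH'edge BQ heBQ))
      (AP.transfer H' (hH'edge AP heAP)).length i
      (AP.transfer H' (hH'edge AP heAP)) (AQ.transfer H' (hH'edge AQ heAQ))
      le_rfl (hAPp.transfer _) (hAQp.transfer _)
      (by
        intro w hw
        rw [Walk.support_transfer] at hw ⊢
        exact hPdisj w hw)
      (by
        intro w hw
        rw [Walk.support_transfer] at hw ⊢
        exact hQdisj w hw)
      (by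
        rw [Walk.support_transfer]
        intro hx
        exact hQdisj _ hx BQ.start_mem_support)
      (by
        rw [Walk.support_transfer]
        intro hy
        exact hPdisj _ hy BP.start_mem_support)


end Aux

/-- In an `ℓ`-tangle-free graph, `D^(ℓ)_{ij} ≤ B^(ℓ)_{ij} ≤ D^(ℓ)_{ij} + 1`, i.e.
every entry of `B^(ℓ) - D^(ℓ)` lies in `{0, 1}`. -/
theorem distEntry_le_pathCount_le_succ {V : Type*} [Fintype V] [DecidableEq V]
    (G : SimpleGraph V) (ℓ : ℕ) (hℓ : 1 ≤ ℓ) (htf : TangleFree G ℓ) (i j : V) :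
    distEntry G ℓ i j ≤ pathCount G ℓ i j ∧
    pathCount G ℓ i j ≤ distEntry G ℓ i j + 1 := by
  classical
  haveI : G.LocallyFinite := fun v => (G.neighborSet v).toFinite.fintype
  have hfin : {p : G.Walk i j | p.IsPath ∧ p.length = ℓ}.Finite :=
    Set.Finite.subset (Set.toFinite {p : G.Walk i j | p.length = ℓ}) (fun p hp => hp.2)
  constructor
  · by_cases hd : G.edist i j = (ℓ : ℕ∞)
    · rw [distEntry, if_pos hd]
      obtain ⟨w, hw⟩ := SimpleGraph.exists_walk_of_edist_eq_coe hd
      have hlen : w.bypass.length = ℓ := by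
        have h1 : (ℓ : ℕ∞) ≤ (w.bypass.length : ℕ∞) := hd ▸ SimpleGraph.edist_le _
        have h2 : w.bypass.length ≤ ℓ := hw ▸ w.length_bypass_le
        exact le_antisymm h2 (by exact_mod_cast h1)
      have hne : {p : G.Walk i j | p.IsPath ∧ p.length = ℓ}.Nonempty :=
        ⟨w.bypass, w.bypass_isPath, hlen⟩
      rw [pathCount]
      have := (Set.ncard_pos hfin).mpr hne
      omega
    · rw [distEntry, if_neg hd]
      exact Nat.zero_le _
  · by_cases hd : G.edist i j = (ℓ : ℕ∞)
    · rw [distEntry, if_pos hd, pathCount]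
      by_contra hcon
      push_neg at hcon
      obtain ⟨a, ha, b, hb, c, hc, hab, hac, hbc⟩ := (Set.two_lt_ncard hfin).mp (by omega)
      exact core_no_three htf a b c ha.1 hb.1 hc.1 (le_of_eq ha.2) (le_of_eq hb.2)
        (le_of_eq hc.2) hab hac hbc
    · rw [distEntry, if_neg hd, pathCount]
      by_contra hcon
      push_neg at hcon
      obtain ⟨a, ha, b, hb, hab⟩ := (Set.one_lt_ncard hfin).mp (by omega)
      have hleℓ : G.edist i j ≤ (ℓ : ℕ∞) := by
        have h1 := SimpleGraph.edist_le a
        rwa [ha.2] at h1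
      have hlt : G.edist i j < (ℓ : ℕ∞) := lt_of_le_of_ne hleℓ hd
      have hne_top : G.edist i j ≠ ⊤ := (hlt.trans_le le_top).ne
      obtain ⟨d0, hd0⟩ := WithTop.ne_top_iff_exists.mp hne_top
      obtain ⟨w, hw⟩ := SimpleGraph.exists_walk_of_edist_eq_coe hd0.symm
      have hd0lt : d0 < ℓ := by
        rw [← hd0] at hlt
        exact WithTop.coe_lt_coe.mp hlt
      have hglen : w.bypass.length < ℓ := lt_of_le_of_lt (hw ▸ w.length_bypass_le) hd0lt
      have hga : w.bypass ≠ a := fun h => by rw [h, ha.2] at hglen; omega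
      have hgb : w.bypass ≠ b := fun h => by rw [h, hb.2] at hglen; omega
      exact core_no_three htf a b w.bypass ha.1 hb.1 w.bypass_isPath (le_of_eq ha.2)
        (le_of_eq hb.2) (le_of_lt hglen) hab (Ne.symm hga) (Ne.symm hgb)
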